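/- Let k be a field, M̂ an additive abelian group, M ⊆ M̂ a subgroup, Ŝ ⊆ M̂ a submonoid, and S = Ŝ ∩ M (a submonoid of M). Then the ring homomorphism of monoid algebras k[S] → k[Ŝ] induced by the inclusion of monoids S ⊆ Ŝ induces a surjective map on prime spectra: every prime ideal of k[S] is the contraction of a prime ideal of k[Ŝ]. -/

import Mathlib

section Aux

variable {k : Type*} [Field k] {Mhat : Type*} [AddCommGroup Mhat]
  (M : AddSubgroup Mhat) (Shat : AddSubmonoid Mhat)

noncomputable def incl : ↥(Shat ⊓ M.toAddSubmonoid) →+ ↥Shat :=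
  AddSubmonoid.inclusion (inf_le_left : Shat ⊓ M.toAddSubmonoid ≤ Shat)

lemma incl_injective : Function.Injective (incl M Shat) := by
  intro a b h
  have : ((incl M Shat a : ↥Shat) : Mhat) = ((incl M Shat b : ↥Shat) : Mhat) := by rw [h]
  exact Subtype.ext this

noncomputable def iotaR : AddMonoidAlgebra k ↥(Shat ⊓ M.toAddSubmonoid) →+* AddMonoidAlgebra k ↥Shat :=
  AddMonoidAlgebra.mapDomainRingHom k (incl M Shat)

noncomputable def proj (f : AddMonoidAlgebra k ↥Shat) :
    AddMonoidAlgebra k ↥(Shat ⊓ M.toAddSubmonoid) :=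
  AddMonoidAlgebra.ofCoeff (Finsupp.comapDomain (incl M Shat) f.coeff (incl_injective M Shat).injOn)

lemma proj_add (f g : AddMonoidAlgebra k ↥Shat) :
    proj M Shat (f + g) = proj M Shat f + proj M Shat g :=
  congrArg AddMonoidAlgebra.ofCoeff
    (Finsupp.comapDomain_add_of_injective (incl_injective M Shat) f.coeff g.coeff)

lemma proj_zero : proj M Shat (0 : AddMonoidAlgebra k ↥Shat) = 0 := by
  ext a; rfl

lemma proj_single_mem (t : ↥Shat) (c : k) (h : (t : Mhat) ∈ M) :
    proj M Shat (AddMonoidAlgebra.single t c) =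
      AddMonoidAlgebra.single (⟨(t : Mhat), t.2, h⟩ : ↥(Shat ⊓ M.toAddSubmonoid)) c := by
  have ht : t = incl M Shat ⟨(t : Mhat), t.2, h⟩ := rfl
  rw [proj]
  rw [show (AddMonoidAlgebra.single t c : AddMonoidAlgebra k ↥Shat)
      = AddMonoidAlgebra.single (incl M Shat ⟨(t : Mhat), t.2, h⟩) c from by rw [← ht]]
  exact congrArg AddMonoidAlgebra.ofCoeff (Finsupp.comapDomain_single _ _ _ _)

lemma proj_single_not_mem (t : ↥Shat) (c : k) (h : (t : Mhat) ∉ M) :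
    proj M Shat (AddMonoidAlgebra.single t c) = 0 := by
  classical
  ext a
  rw [proj, AddMonoidAlgebra.coeff_ofCoeff, Finsupp.comapDomain_apply,
    AddMonoidAlgebra.coeff_single, Finsupp.single_apply, if_neg, AddMonoidAlgebra.coeff_zero,
    Finsupp.coe_zero, Pi.zero_apply]
  intro he
  exact h (he ▸ (a.2.2 : (a : Mhat) ∈ M))

lemma proj_mul (b : AddMonoidAlgebra k ↥Shat)
    (r : AddMonoidAlgebra k ↥(Shat ⊓ M.toAddSubmonoid)) :
    proj M Shat (b * iotaR M Shat r) = proj M Shat b * r := by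
  induction r using AddMonoidAlgebra.induction_linear with
  | zero => rw [map_zero, mul_zero, proj_zero, mul_zero]
  | add f g hf hg => rw [map_add, mul_add, proj_add, hf, hg, mul_add]
  | single u d =>
    induction b using AddMonoidAlgebra.induction_linear with
    | zero => rw [zero_mul, proj_zero, zero_mul]
    | add f g hf hg => rw [add_mul, proj_add, hf, hg, proj_add, add_mul]
    | single t c =>
      have hmap : iotaR M Shat (AddMonoidAlgebra.single u d : AddMonoidAlgebra k _)
          = AddMonoidAlgebra.single (incl M Shat u) d := AddMonoidAlgebra.mapDomain_single
      rw [hmap, AddMonoidAlgebra.single_mul_single]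
      by_cases h : (t : Mhat) ∈ M
      · have h2 : ((t + incl M Shat u : ↥Shat) : Mhat) ∈ M := M.add_mem h u.2.2
        rw [proj_single_mem M Shat _ _ h2, proj_single_mem M Shat _ _ h,
          AddMonoidAlgebra.single_mul_single]
        congr 1
      · have h2 : ((t + incl M Shat u : ↥Shat) : Mhat) ∉ M := by
          intro hm
          apply h
          have he : (t : Mhat) = ((t + incl M Shat u : ↥Shat) : Mhat) - (u : Mhat) := by
            have : ((t + incl M Shat u : ↥Shat) : Mhat) = (t : Mhat) + (u : Mhat) := rfl
            rw [this]; abel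
          rw [he]
          exact M.sub_mem hm u.2.2
        rw [proj_single_not_mem M Shat _ _ h2, proj_single_not_mem M Shat _ _ h, zero_mul]

lemma proj_iotaR (x : AddMonoidAlgebra k ↥(Shat ⊓ M.toAddSubmonoid)) :
    proj M Shat (iotaR M Shat x) = x := by
  induction x using AddMonoidAlgebra.induction_linear with
  | zero => rw [map_zero, proj_zero]
  | add f g hf hg => rw [map_add, proj_add, hf, hg]
  | single u d =>
    have hmap : iotaR M Shat (AddMonoidAlgebra.single u d : AddMonoidAlgebra k _)
        = AddMonoidAlgebra.single (incl M Shat u) d := AddMonoidAlgebra.mapDomain_single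
    rw [hmap, proj_single_mem M Shat _ _ (u.2.2 : ((incl M Shat u : ↥Shat) : Mhat) ∈ M)]
    congr 1

end Aux

/-- Let `k` be a field, `M ⊆ M̂` a subgroup of an abelian group, `Ŝ ⊆ M̂` a submonoid and
`S = Ŝ ∩ M`. Then the map of monoid algebras `k[S] → k[Ŝ]` induced by the inclusion is
surjective on prime spectra: every prime of `k[S]` is a contraction of a prime of `k[Ŝ]`. -/
theorem monoidAlgebra_inclusion_spec_surjective {k : Type*} [Field k]
    {Mhat : Type*} [AddCommGroup Mhat] (M : AddSubgroup Mhat) (Shat : AddSubmonoid Mhat) :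
    ∀ p : Ideal (AddMonoidAlgebra k ↥(Shat ⊓ M.toAddSubmonoid)), p.IsPrime →
      ∃ q : Ideal (AddMonoidAlgebra k ↥Shat), q.IsPrime ∧
        Ideal.comap (AddMonoidAlgebra.mapDomainRingHom k
          (AddSubmonoid.inclusion (inf_le_left : Shat ⊓ M.toAddSubmonoid ≤ Shat))) q = p := by
  intro p hp
  classical
  let ι : AddMonoidAlgebra k ↥(Shat ⊓ M.toAddSubmonoid) →+* AddMonoidAlgebra k ↥Shat :=
    iotaR M Shat
  -- the ideal of elements all of whose "translated degree-zero parts" lie in `p`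
  let K : Ideal (AddMonoidAlgebra k ↥Shat) :=
    { carrier := {a | ∀ b, proj M Shat (b * a) ∈ p}
      add_mem' := fun {x y} hx hy b => by
        rw [mul_add, proj_add]; exact p.add_mem (hx b) (hy b)
      zero_mem' := fun b => by rw [mul_zero, proj_zero]; exact p.zero_mem
      smul_mem' := fun c a ha b => by
        rw [smul_eq_mul, ← mul_assoc]; exact ha (b * c) }
  have hmapK : Ideal.map ι p ≤ K := by
    rw [Ideal.map_le_iff_le_comap]
    intro x hx
    intro b
    rw [proj_mul]
    exact p.mul_mem_left _ hx
  set T : Submonoid (AddMonoidAlgebra k ↥Shat) := p.primeCompl.map ι.toMonoidHom with hT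
  have hdisj : Disjoint ((Ideal.map ι p : Ideal _) : Set (AddMonoidAlgebra k ↥Shat))
      (T : Set (AddMonoidAlgebra k ↥Shat)) := by
    rw [Set.disjoint_left]
    rintro a ha ⟨x, hx, rfl⟩
    apply hx
    have h1 := hmapK ha 1
    rw [one_mul] at h1
    have h2 : proj M Shat (iotaR M Shat x) ∈ p := h1
    rwa [proj_iotaR] at h2
  obtain ⟨q, hq, hle, hqdisj⟩ := Ideal.exists_le_prime_disjoint (I := Ideal.map ι p) T hdisj
  refine ⟨q, hq, ?_⟩
  have : Ideal.comap ι q = p := by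
    apply le_antisymm
    · intro x hx
      by_contra hxp
      exact Set.disjoint_left.mp hqdisj hx ⟨x, hxp, rfl⟩
    · intro x hx
      exact hle (Ideal.mem_map_of_mem ι hx)
  exact this
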